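/- For 0 < q < 1, the commutator ideal of A(SU_q(2)) equals V₁, the ℂ-linear span of the elements e_{j,k,l} with k + l ≥ 1. -/

import Mathlib

noncomputable section

namespace QAlg

/-- Generators of a free *-algebra: `inl i` is the generator `z i`, and
`inr i` is its formal adjoint `(z i)*`. -/
abbrev Gen (X : Type) := X ⊕ X

/-- The free algebra on the doubled generating set, realized as the monoid
algebra of the free monoid. -/
abbrev F (X : Type) := MonoidAlgebra ℂ (FreeMonoid (Gen X))

/-- The *-operation on words: reverse the word and exchange the two copies
of the generators. -/
def wordStar {X : Type} (w : FreeMonoid (Gen X)) : FreeMonoid (Gen X) :=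
  FreeMonoid.ofList (((FreeMonoid.toList w).map Sum.swap).reverse)

lemma wordStar_mul {X : Type} (w v : FreeMonoid (Gen X)) :
    wordStar (w * v) = wordStar v * wordStar w := by
  simp [wordStar, FreeMonoid.toList_mul, FreeMonoid.ofList_append]

lemma wordStar_wordStar {X : Type} (w : FreeMonoid (Gen X)) : wordStar (wordStar w) = w := by
  simp [wordStar, List.map_reverse, List.map_map, Sum.swap_swap_eq]

/-- The canonical conjugate-linear antimultiplicative involution on the free
algebra `F X`, determined by `star (z i) = (z i)*` and complex conjugation
on scalars. -/
def starF {X : Type} (f : F X) : F X :=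
  Finsupp.sum f.coeff fun w c => MonoidAlgebra.single (wordStar w) ((starRingEnd ℂ) c)

lemma starF_single {X : Type} (w : FreeMonoid (Gen X)) (c : ℂ) :
    starF (MonoidAlgebra.single w c) = MonoidAlgebra.single (wordStar w) ((starRingEnd ℂ) c) := by
  classical
  unfold starF
  rw [MonoidAlgebra.coeff_single]
  refine Finsupp.sum_single_index ?_
  simp

lemma starF_zero {X : Type} : starF (0 : F X) = 0 := by simp [starF]

lemma starF_add {X : Type} (f g : F X) : starF (f + g) = starF f + starF g := by
  classical
  unfold starF
  rw [MonoidAlgebra.coeff_add]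
  refine Finsupp.sum_add_index' (fun w => by simp) (fun w c₁ c₂ => by
    simp [map_add, MonoidAlgebra.single_add])

lemma starF_single_mul {X : Type} (w : FreeMonoid (Gen X)) (c : ℂ) (g : F X) :
    starF (MonoidAlgebra.single w c * g) = starF g * starF (MonoidAlgebra.single w c) := by
  classical
  induction g using MonoidAlgebra.induction with
  | zero => simp [starF_zero]
  | single_add v d g _ _ ihg =>
    rw [mul_add, starF_add, starF_add, add_mul, ihg]
    congr 1
    rw [MonoidAlgebra.single_mul_single, starF_single, starF_single, starF_single,
      MonoidAlgebra.single_mul_single, wordStar_mul, map_mul, mul_comm]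

lemma starF_mul {X : Type} (f g : F X) : starF (f * g) = starF g * starF f := by
  classical
  induction f using MonoidAlgebra.induction with
  | zero => simp [starF_zero]
  | single_add w c f _ _ ih =>
    rw [add_mul, starF_add, starF_add, ih, mul_add, starF_single_mul]

lemma starF_starF {X : Type} (f : F X) : starF (starF f) = f := by
  classical
  induction f using MonoidAlgebra.induction with
  | zero => simp [starF_zero]
  | single_add w c f _ _ ih =>
    rw [starF_add, starF_add, ih, starF_single, starF_single, wordStar_wordStar,
      Complex.conj_conj]

/-- The free *-algebra structure on `F X`. -/
def starRingF (X : Type) : StarRing (F X) where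
  star := starF
  star_involutive := starF_starF
  star_mul := starF_mul
  star_add := starF_add

/-- The generator `z i` inside the free *-algebra. -/
def zF {X : Type} (i : X) : F X := MonoidAlgebra.of ℂ _ (FreeMonoid.of (Sum.inl i))

/-- The formal adjoint `(z i)*` inside the free *-algebra. -/
def zsF {X : Type} (i : X) : F X := MonoidAlgebra.of ℂ _ (FreeMonoid.of (Sum.inr i))

/-- The defining relations of quantum `SU(2)` (with `zF 0 = α`, `zF 1 = β`,
`zsF i` playing the role of the adjoint generators), together with their
images under the *-operation. -/
inductive surel (q : ℝ) : F (Fin 2) → F (Fin 2) → Prop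
  | r1 : surel q (zF 1 * zF 0) ((q : ℂ) • (zF 0 * zF 1))
  | r2 : surel q (zsF 1 * zF 0) ((q : ℂ) • (zF 0 * zsF 1))
  | r3 : surel q (zF 1 * zsF 1) (zsF 1 * zF 1)
  | r4 : surel q (zF 0 * zsF 0 + zF 1 * zsF 1) 1
  | r5 : surel q (zsF 0 * zF 0 + ((q ^ 2 : ℝ) : ℂ) • (zF 1 * zsF 1)) 1
  | star_rel {a b} : surel q a b → surel q (starF a) (starF b)

/-- The coordinate *-algebra `A(SU_q(2))`. -/
abbrev SU (q : ℝ) := RingQuot (surel q)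

noncomputable instance (q : ℝ) : StarRing (SU q) :=
  @RingQuot.starRing _ _ (starRingF _) (surel q) (fun _ _ h => surel.star_rel h)

/-- The generator `α` of `A(SU_q(2))`. -/
def αg (q : ℝ) : SU q := RingQuot.mkAlgHom ℂ (surel q) (zF 0)

/-- The generator `β` of `A(SU_q(2))`. -/
def βg (q : ℝ) : SU q := RingQuot.mkAlgHom ℂ (surel q) (zF 1)

/-- The elements `e_{j,k,l}` of `A(SU_q(2))`: `α^j β^k (β*)^l` for `j ≥ 0`
and `β^k (β*)^l (α*)^{-j}` for `j < 0`. -/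
def e (q : ℝ) (j : ℤ) (k l : ℕ) : SU q :=
  if 0 ≤ j then αg q ^ j.toNat * βg q ^ k * star (βg q) ^ l
  else βg q ^ k * star (βg q) ^ l * star (αg q) ^ (-j).toNat

/-- The subspace `V_m ⊆ A(SU_q(2))` spanned by the `e_{j,k,l}` with `k + l ≥ m`. -/
def V (q : ℝ) (m : ℕ) : Submodule ℂ (SU q) :=
  Submodule.span ℂ {x | ∃ (j : ℤ) (k l : ℕ), m ≤ k + l ∧ x = e q j k l}

/-- The commutator ideal of a ring: the two-sided ideal generated by all
commutators `a * b - b * a`.  For a *-algebra this coincides with the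
two-sided *-ideal generated by the commutators, since the star of a
commutator is again a commutator. -/
def commutatorIdeal (A : Type) [Ring A] : TwoSidedIdeal A :=
  TwoSidedIdeal.span {x | ∃ a b : A, x = a * b - b * a}

lemma starF_smul {X : Type} (c : ℂ) (f : F X) :
    starF (c • f) = (starRingEnd ℂ) c • starF f := by
  classical
  induction f using MonoidAlgebra.induction with
  | zero => simp [starF_zero]
  | single_add w d f _ _ ih =>
    rw [smul_add, starF_add, starF_add, smul_add, ih]
    congr 1
    rw [MonoidAlgebra.smul_single, starF_single, starF_single, MonoidAlgebra.smul_single]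
    simp [smul_eq_mul, map_mul]

lemma starF_one {X : Type} : starF (1 : F X) = 1 := by
  classical
  rw [MonoidAlgebra.one_def, starF_single]
  simp [wordStar]

lemma starF_zF {X : Type} (i : X) : starF (zF i) = zsF i := by
  classical
  rw [zF, zsF, MonoidAlgebra.of_apply, MonoidAlgebra.of_apply, starF_single]
  simp [wordStar, FreeMonoid.toList_of]

lemma starF_zsF {X : Type} (i : X) : starF (zsF i) = zF i := by
  classical
  rw [zF, zsF, MonoidAlgebra.of_apply, MonoidAlgebra.of_apply, starF_single]
  simp [wordStar, FreeMonoid.toList_of]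

lemma star_mkAlgHom (q : ℝ) (x : F (Fin 2)) :
    star (RingQuot.mkAlgHom ℂ (surel q) x) = RingQuot.mkAlgHom ℂ (surel q) (starF x) := by
  have h : ∀ y : F (Fin 2), RingQuot.mkAlgHom ℂ (surel q) y = ⟨Quot.mk _ y⟩ := fun y => by
    simp only [RingQuot.mkAlgHom_def, RingQuot.mkRingHom_def]; rfl
  rw [h, h]
  exact rfl
lemma star_αg (q : ℝ) : star (αg q) = RingQuot.mkAlgHom ℂ (surel q) (zsF 0) := by
  rw [αg, star_mkAlgHom, starF_zF]

lemma star_βg (q : ℝ) : star (βg q) = RingQuot.mkAlgHom ℂ (surel q) (zsF 1) := by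
  rw [βg, star_mkAlgHom, starF_zF]

section Rels

variable (q : ℝ)

lemma rel_ba : βg q * αg q = (q : ℂ) • (αg q * βg q) := by
  rw [αg, βg]
  have h := RingQuot.mkAlgHom_rel ℂ (surel.r1 (q := q))
  simp only [map_mul, map_smul] at h
  exact h

lemma rel_bsa : star (βg q) * αg q = (q : ℂ) • (αg q * star (βg q)) := by
  rw [star_βg, αg]
  have h := RingQuot.mkAlgHom_rel ℂ (surel.r2 (q := q))
  simp only [map_mul, map_smul] at h
  exact h

lemma rel_bbs : βg q * star (βg q) = star (βg q) * βg q := by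
  rw [star_βg, βg]
  have h := RingQuot.mkAlgHom_rel ℂ (surel.r3 (q := q))
  simp only [map_mul] at h
  exact h

lemma rel_unit1 : αg q * star (αg q) + βg q * star (βg q) = 1 := by
  rw [star_αg, star_βg, αg, βg]
  have h := RingQuot.mkAlgHom_rel ℂ (surel.r4 (q := q))
  simp only [map_mul, map_add, map_one] at h
  exact h

lemma rel_unit2 : star (αg q) * αg q + ((q : ℂ) ^ 2) • (βg q * star (βg q)) = 1 := by
  rw [star_αg, star_βg, αg, βg]
  have h := RingQuot.mkAlgHom_rel ℂ (surel.r5 (q := q))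
  have h2 : ((q ^ 2 : ℝ) : ℂ) = (q : ℂ) ^ 2 := by push_cast; ring
  simp only [map_mul, map_add, map_one, map_smul, h2] at h
  exact h

lemma rel_asbs : star (αg q) * star (βg q) = (q : ℂ) • (star (βg q) * star (αg q)) := by
  rw [star_αg, star_βg]
  have h := RingQuot.mkAlgHom_rel ℂ (surel.star_rel (surel.r1 (q := q)))
  rw [starF_mul, starF_smul, starF_mul, starF_zF, starF_zF] at h
  simp only [map_mul, map_smul, Complex.conj_ofReal] at h
  exact h

lemma rel_asb : star (αg q) * βg q = (q : ℂ) • (βg q * star (αg q)) := by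
  rw [star_αg, βg]
  have h := RingQuot.mkAlgHom_rel ℂ (surel.star_rel (surel.r2 (q := q)))
  rw [starF_mul, starF_smul, starF_mul, starF_zF, starF_zsF] at h
  simp only [map_mul, map_smul, Complex.conj_ofReal] at h
  exact h

end Rels

lemma mul_pow_smul {A : Type} [Ring A] [Algebra ℂ A] {x y : A} {c : ℂ}
    (h : x * y = c • (y * x)) : ∀ n : ℕ, x * y ^ n = c ^ n • (y ^ n * x)
  | 0 => by simp
  | n + 1 => by
    rw [pow_succ, ← mul_assoc, mul_pow_smul h n, smul_mul_assoc, mul_assoc, h,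
      mul_smul_comm, smul_smul, ← pow_succ, ← mul_assoc, ← pow_succ]

lemma swap_smul {A : Type} [Ring A] [Algebra ℂ A] {x y : A} {c : ℂ}
    (hc : c ≠ 0) (h : x * y = c • (y * x)) : y * x = c⁻¹ • (x * y) := by
  rw [h, smul_smul, inv_mul_cancel₀ hc, one_smul]

section Pows

variable (q : ℝ) (hq : (q : ℂ) ≠ 0)

lemma F5 (n : ℕ) : βg q * αg q ^ n = (q : ℂ) ^ n • (αg q ^ n * βg q) :=
  mul_pow_smul (rel_ba q) n

lemma F6 (n : ℕ) : star (βg q) * αg q ^ n = (q : ℂ) ^ n • (αg q ^ n * star (βg q)) :=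
  mul_pow_smul (rel_bsa q) n

lemma F3 (n : ℕ) : star (αg q) * βg q ^ n = (q : ℂ) ^ n • (βg q ^ n * star (αg q)) :=
  mul_pow_smul (rel_asb q) n

lemma F4 (n : ℕ) : star (αg q) * star (βg q) ^ n = (q : ℂ) ^ n • (star (βg q) ^ n * star (αg q)) :=
  mul_pow_smul (rel_asbs q) n

include hq in
lemma F1 (n : ℕ) : αg q * βg q ^ n = ((q : ℂ)⁻¹) ^ n • (βg q ^ n * αg q) :=
  mul_pow_smul (swap_smul hq (rel_ba q)) n

include hq in
lemma F2 (n : ℕ) : αg q * star (βg q) ^ n = ((q : ℂ)⁻¹) ^ n • (star (βg q) ^ n * αg q) :=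
  mul_pow_smul (swap_smul hq (rel_bsa q)) n

include hq in
lemma F7 (n : ℕ) : βg q * star (αg q) ^ n = ((q : ℂ)⁻¹) ^ n • (star (αg q) ^ n * βg q) :=
  mul_pow_smul (swap_smul hq (rel_asb q)) n

include hq in
lemma F8 (n : ℕ) :
    star (βg q) * star (αg q) ^ n = ((q : ℂ)⁻¹) ^ n • (star (αg q) ^ n * star (βg q)) :=
  mul_pow_smul (swap_smul hq (rel_asbs q)) n

lemma F9 (n : ℕ) : star (βg q) * βg q ^ n = βg q ^ n * star (βg q) :=
 by
  have h : Commute (star (βg q)) (βg q) := (rel_bbs q).symm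
  exact h.pow_right n

lemma F10 (n : ℕ) : βg q * star (βg q) ^ n = star (βg q) ^ n * βg q :=
 by
  have h : Commute (βg q) (star (βg q)) := rel_bbs q
  exact h.pow_right n

end Pows
lemma mul_mul_smul {A : Type} [Ring A] [Algebra ℂ A] {x y : A} {c : ℂ}
    (h : x * y = c • (y * x)) (z : A) : x * (y * z) = c • (y * (x * z)) := by
  rw [← mul_assoc, h, smul_mul_assoc, mul_assoc]

lemma mul_pow_push {A : Type} [Ring A] [Algebra ℂ A] {x y : A} {c : ℂ}
    (h : x * y = c • (y * x)) (n : ℕ) (z : A) :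
    x * (y ^ n * z) = c ^ n • (y ^ n * (x * z)) :=
  mul_mul_smul (mul_pow_smul h n) z

lemma comm_push {A : Type} [Ring A] {x y : A} (h : x * y = y * x) (n : ℕ) (z : A) :
    x * (y ^ n * z) = y ^ n * (x * z) := by
  have hc : Commute x y := h
  rw [← mul_assoc, (hc.pow_right n).eq, mul_assoc]

lemma e_nonneg (q : ℝ) {j : ℤ} (hj : 0 ≤ j) (k l : ℕ) :
    e q j k l = αg q ^ j.toNat * βg q ^ k * star (βg q) ^ l := by simp [e, hj]

lemma e_nonpos (q : ℝ) {j : ℤ} (hj : j ≤ 0) (k l : ℕ) :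
    e q j k l = βg q ^ k * star (βg q) ^ l * star (αg q) ^ (-j).toNat := by
  rcases lt_or_eq_of_le hj with h | h
  · rw [e, if_neg (not_le.mpr h)]
  · subst h; simp [e]

lemma e_nonneg' (q : ℝ) {j : ℤ} (hj : 0 ≤ j) (k l : ℕ) :
    e q j k l = αg q ^ j.toNat * (βg q ^ k * star (βg q) ^ l) := by
  rw [e_nonneg q hj, mul_assoc]

lemma e_nonpos' (q : ℝ) {j : ℤ} (hj : j ≤ 0) (k l : ℕ) :
    e q j k l = βg q ^ k * (star (βg q) ^ l * star (αg q) ^ (-j).toNat) := by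
  rw [e_nonpos q hj, mul_assoc]

lemma e_mem_V0 (q : ℝ) (j : ℤ) (k l : ℕ) : e q j k l ∈ V q 0 :=
  Submodule.subset_span ⟨j, k, l, Nat.zero_le _, rfl⟩

section GenMul

variable (q : ℝ)

lemma βg_mul_e (j : ℤ) (k l : ℕ) : βg q * e q j k l ∈ V q 0 := by
  rcases le_or_gt 0 j with hj | hj
  · have key : βg q * e q j k l = (q : ℂ) ^ j.toNat • e q j (k + 1) l := by
      rw [e_nonneg' q hj, mul_pow_push (rel_ba q) _ _, e_nonneg' q hj (k + 1) l,
        ← mul_assoc (βg q), ← pow_succ']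
    rw [key]
    exact Submodule.smul_mem _ _ (e_mem_V0 q _ _ _)
  · have key : βg q * e q j k l = e q j (k + 1) l := by
      rw [e_nonpos' q hj.le, e_nonpos' q hj.le (k + 1) l, ← mul_assoc (βg q), ← pow_succ']
    rw [key]; exact e_mem_V0 q _ _ _

lemma βsg_mul_e (j : ℤ) (k l : ℕ) : star (βg q) * e q j k l ∈ V q 0 := by
  rcases le_or_gt 0 j with hj | hj
  · have key : star (βg q) * e q j k l = (q : ℂ) ^ j.toNat • e q j k (l + 1) := by
      rw [e_nonneg' q hj, mul_pow_push (rel_bsa q) _ _,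
        comm_push (rel_bbs q).symm, ← pow_succ', e_nonneg' q hj k (l + 1)]
    rw [key]
    exact Submodule.smul_mem _ _ (e_mem_V0 q _ _ _)
  · have key : star (βg q) * e q j k l = e q j k (l + 1) := by
      rw [e_nonpos' q hj.le, comm_push (rel_bbs q).symm, ← mul_assoc (star (βg q)),
        ← pow_succ', e_nonpos' q hj.le k (l + 1)]
    rw [key]; exact e_mem_V0 q _ _ _

end GenMul
section GenMul2

variable (q : ℝ) (hq : (q : ℂ) ≠ 0)

lemma aas (hj : True) : αg q * star (αg q) = 1 - βg q * star (βg q) :=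
  eq_sub_of_add_eq (rel_unit1 q)

lemma asa : star (αg q) * αg q = 1 - ((q : ℂ) ^ 2) • (βg q * star (βg q)) :=
  eq_sub_of_add_eq (rel_unit2 q)

include hq in
lemma αg_mul_e (j : ℤ) (k l : ℕ) : αg q * e q j k l ∈ V q 0 := by
  rcases le_or_gt 0 j with hj | hj
  · have hj1 : (0 : ℤ) ≤ j + 1 := by omega
    have ht : (j + 1).toNat = j.toNat + 1 := by omega
    have key : αg q * e q j k l = e q (j + 1) k l := by
      rw [e_nonneg' q hj, e_nonneg' q hj1, ht, pow_succ', mul_assoc]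
    rw [key]; exact e_mem_V0 q _ _ _
  · have hj1 : j + 1 ≤ 0 := by omega
    have hm : (-j).toNat = (-(j + 1)).toNat + 1 := by omega
    set m' := (-(j + 1)).toNat with hm'
    have key : αg q * e q j k l
        = ((q : ℂ)⁻¹) ^ k • (((q : ℂ)⁻¹) ^ l •
            (e q (j + 1) k l - e q (j + 1) (k + 1) (l + 1))) := by
      rw [e_nonpos' q hj.le, hm, mul_pow_push (swap_smul hq (rel_ba q)) k,
        mul_pow_push (swap_smul hq (rel_bsa q)) l,
        pow_succ' (star (αg q)) m', ← mul_assoc (αg q), aas q trivial, sub_mul, one_mul,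
        mul_sub (star (βg q) ^ l), mul_assoc (βg q) (star (βg q)),
        ← comm_push (rel_bbs q) l, ← mul_assoc (star (βg q) ^ l) (star (βg q)), ← pow_succ,
        mul_smul_comm, mul_sub (βg q ^ k), ← mul_assoc (βg q ^ k) (βg q), ← pow_succ,
        e_nonpos' q hj1 k l, e_nonpos' q hj1 (k + 1) (l + 1)]
    rw [key]
    exact Submodule.smul_mem _ _ (Submodule.smul_mem _ _
      (sub_mem (e_mem_V0 q _ _ _) (e_mem_V0 q _ _ _)))

lemma αsg_mul_e (j : ℤ) (k l : ℕ) : star (αg q) * e q j k l ∈ V q 0 := by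
  rcases le_or_gt j 0 with hj | hj
  · have hj1 : j - 1 ≤ 0 := by omega
    have hm : (-(j - 1)).toNat = (-j).toNat + 1 := by omega
    have key : star (αg q) * e q j k l
        = (q : ℂ) ^ k • ((q : ℂ) ^ l • e q (j - 1) k l) := by
      rw [e_nonpos' q hj, mul_pow_push (rel_asb q) k, mul_pow_push (rel_asbs q) l,
        e_nonpos' q hj1 k l, hm, pow_succ' (star (αg q)) ((-j).toNat), mul_smul_comm]
    rw [key]
    exact Submodule.smul_mem _ _ (Submodule.smul_mem _ _ (e_mem_V0 q _ _ _))
  · have hj1 : (0 : ℤ) ≤ j - 1 := by omega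
    have hn : j.toNat = (j - 1).toNat + 1 := by omega
    set n' := (j - 1).toNat with hn'
    have key : star (αg q) * e q j k l
        = e q (j - 1) k l - ((q : ℂ) ^ 2 * ((q : ℂ) ^ n') ^ 2) •
            e q (j - 1) (k + 1) (l + 1) := by
      rw [e_nonneg' q hj.le, hn, pow_succ' (αg q) n', mul_assoc (αg q),
        ← mul_assoc (star (αg q)) (αg q), asa q, sub_mul, one_mul, smul_mul_assoc,
        mul_assoc (βg q) (star (βg q)), mul_pow_push (rel_bsa q) n',
        mul_smul_comm, mul_pow_push (rel_ba q) n',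
        comm_push (rel_bbs q).symm k, ← pow_succ', ← mul_assoc (βg q), ← pow_succ',
        e_nonneg' q hj1 k l, e_nonneg' q hj1 (k + 1) (l + 1)]
      module
    rw [key]
    exact sub_mem (e_mem_V0 q _ _ _) (Submodule.smul_mem _ _ (e_mem_V0 q _ _ _))

end GenMul2
lemma gen_mul_V0 (q : ℝ) (hq : (q : ℂ) ≠ 0) (g : SU q)
    (hg : g = αg q ∨ g = βg q ∨ g = star (αg q) ∨ g = star (βg q)) :
    ∀ v ∈ V q 0, g * v ∈ V q 0 := by
  intro v hv
  induction hv using Submodule.span_induction with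
  | mem x hx =>
    obtain ⟨j, k, l, -, rfl⟩ := hx
    rcases hg with rfl | rfl | rfl | rfl
    · exact αg_mul_e q hq j k l
    · exact βg_mul_e q j k l
    · exact αsg_mul_e q j k l
    · exact βsg_mul_e q j k l
  | zero => simpa using Submodule.zero_mem _
  | add x y hx hy ihx ihy => rw [mul_add]; exact Submodule.add_mem _ ihx ihy
  | smul a x hx ih => rw [mul_smul_comm]; exact Submodule.smul_mem _ _ ih

lemma mkAlgHom_word_mul_V0 (q : ℝ) (hq : (q : ℂ) ≠ 0) (w : FreeMonoid (Gen (Fin 2))) :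
    ∀ v ∈ V q 0, RingQuot.mkAlgHom ℂ (surel q) (MonoidAlgebra.of ℂ _ w) * v ∈ V q 0 := by
  induction w using FreeMonoid.inductionOn with
  | one => intro v hv; rw [map_one, map_one, one_mul]; exact hv
  | of x =>
    intro v hv
    refine gen_mul_V0 q hq _ ?_ v hv
    rcases x with i | i
    · fin_cases i
      · exact Or.inl (by rw [αg]; rfl)
      · exact Or.inr (Or.inl (by rw [βg]; rfl))
    · fin_cases i
      · exact Or.inr (Or.inr (Or.inl (by rw [star_αg]; rfl)))
      · exact Or.inr (Or.inr (Or.inr (by rw [star_βg]; rfl)))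
  | mul x y ihx ihy =>
    intro v hv
    rw [map_mul, map_mul, mul_assoc]
    exact ihx _ (ihy v hv)

lemma mem_V0 (q : ℝ) (hq : (q : ℂ) ≠ 0) (x : SU q) : x ∈ V q 0 := by
  obtain ⟨f, rfl⟩ := RingQuot.mkAlgHom_surjective ℂ (surel q) x
  have h1 : (1 : SU q) ∈ V q 0 := by
    have : (1 : SU q) = e q 0 0 0 := by simp [e]
    rw [this]; exact e_mem_V0 q _ _ _
  induction f using MonoidAlgebra.induction_on with
  | of w =>
    have := mkAlgHom_word_mul_V0 q hq w 1 h1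
    simpa using this
  | add f g ihf ihg => rw [map_add]; exact Submodule.add_mem _ ihf ihg
  | smul r f ih => rw [map_smul]; exact Submodule.smul_mem _ _ ih
open LaurentPolynomial in
/-- Values of the generators under the character sending `α ↦ T`, `β ↦ 0`. -/
def genVal : Gen (Fin 2) → LaurentPolynomial ℂ
  | Sum.inl i => if i = 0 then LaurentPolynomial.T 1 else 0
  | Sum.inr i => if i = 0 then LaurentPolynomial.T (-1) else 0

/-- The character `F (Fin 2) → ℂ[T,T⁻¹]`. -/
def Φhom : F (Fin 2) →ₐ[ℂ] LaurentPolynomial ℂ :=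
  MonoidAlgebra.lift ℂ (LaurentPolynomial ℂ) (FreeMonoid (Gen (Fin 2)))
    (FreeMonoid.lift genVal)

lemma Φ_zF0 : Φhom (zF 0) = LaurentPolynomial.T 1 := by
  rw [Φhom, zF, MonoidAlgebra.lift_of, FreeMonoid.lift_eval_of]; rfl

lemma Φ_zF1 : Φhom (zF 1) = 0 := by
  rw [Φhom, zF, MonoidAlgebra.lift_of, FreeMonoid.lift_eval_of]; rfl

lemma Φ_zsF0 : Φhom (zsF 0) = LaurentPolynomial.T (-1) := by
  rw [Φhom, zsF, MonoidAlgebra.lift_of, FreeMonoid.lift_eval_of]; rfl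

lemma Φ_zsF1 : Φhom (zsF 1) = 0 := by
  rw [Φhom, zsF, MonoidAlgebra.lift_of, FreeMonoid.lift_eval_of]; rfl

lemma T_mul_T_inv : LaurentPolynomial.T (1 : ℤ) * LaurentPolynomial.T (-1) = (1 : LaurentPolynomial ℂ) := by
  rw [← LaurentPolynomial.T_add]; norm_num

lemma T_inv_mul_T : LaurentPolynomial.T (-1 : ℤ) * LaurentPolynomial.T 1 = (1 : LaurentPolynomial ℂ) := by
  rw [← LaurentPolynomial.T_add]; norm_num

lemma surel_preserved (q : ℝ) {a b : F (Fin 2)} (h : surel q a b) :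
    Φhom a = Φhom b ∧ Φhom (starF a) = Φhom (starF b) := by
  induction h with
  | r1 =>
    refine ⟨?_, ?_⟩
    · rw [map_mul, map_smul, map_mul, Φ_zF0, Φ_zF1]; simp
    · rw [starF_mul, starF_smul, starF_mul, starF_zF, starF_zF, map_mul, map_smul,
        map_mul, Φ_zsF0, Φ_zsF1]; simp
  | r2 =>
    refine ⟨?_, ?_⟩
    · rw [map_mul, map_smul, map_mul, Φ_zF0, Φ_zsF1]; simp
    · rw [starF_mul, starF_smul, starF_mul, starF_zF, starF_zsF, map_mul, map_smul,
        map_mul, Φ_zsF0, Φ_zF1]; simp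
  | r3 =>
    refine ⟨?_, ?_⟩
    · rw [map_mul, map_mul, Φ_zF1, Φ_zsF1]
    · rw [starF_mul, starF_mul, starF_zF, starF_zsF, map_mul, map_mul, Φ_zF1, Φ_zsF1]
  | r4 =>
    refine ⟨?_, ?_⟩
    · rw [map_add, map_mul, map_mul, map_one, Φ_zF0, Φ_zF1, Φ_zsF0, Φ_zsF1, T_mul_T_inv]; simp
    · rw [starF_add, starF_mul, starF_mul, starF_one, starF_zF, starF_zF, starF_zsF, starF_zsF,
        map_add, map_mul, map_mul, map_one, Φ_zF0, Φ_zF1, Φ_zsF0, Φ_zsF1, T_mul_T_inv]; simp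
  | r5 =>
    refine ⟨?_, ?_⟩
    · rw [map_add, map_smul, map_mul, map_mul, map_one, Φ_zF1, Φ_zsF0, Φ_zsF1, Φ_zF0,
        T_inv_mul_T]; simp
    · rw [starF_add, starF_smul, starF_mul, starF_mul, starF_one, starF_zF, starF_zF,
        starF_zsF, starF_zsF, map_add, map_smul, map_mul, map_mul, map_one, Φ_zF1, Φ_zsF0,
        Φ_zsF1, Φ_zF0, T_inv_mul_T]; simp
  | star_rel h ih =>
    refine ⟨ih.2, ?_⟩
    rw [starF_starF, starF_starF]; exact ih.1

/-- The induced character on `A(SU_q(2))`. -/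
def φc (q : ℝ) : SU q →ₐ[ℂ] LaurentPolynomial ℂ :=
  RingQuot.liftAlgHom ℂ ⟨Φhom, fun _ _ h => (surel_preserved q h).1⟩

lemma φc_αg (q : ℝ) : φc q (αg q) = LaurentPolynomial.T 1 := by
  rw [αg, φc, RingQuot.liftAlgHom_mkAlgHom_apply, Φ_zF0]

lemma φc_βg (q : ℝ) : φc q (βg q) = 0 := by
  rw [βg, φc, RingQuot.liftAlgHom_mkAlgHom_apply, Φ_zF1]

lemma φc_αsg (q : ℝ) : φc q (star (αg q)) = LaurentPolynomial.T (-1) := by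
  rw [star_αg, φc, RingQuot.liftAlgHom_mkAlgHom_apply, Φ_zsF0]

lemma φc_βsg (q : ℝ) : φc q (star (βg q)) = 0 := by
  rw [star_βg, φc, RingQuot.liftAlgHom_mkAlgHom_apply, Φ_zsF1]

lemma φc_e_diag (q : ℝ) (j : ℤ) : φc q (e q j 0 0) = LaurentPolynomial.T j := by
  rcases le_or_gt 0 j with hj | hj
  · rw [e_nonneg q hj]
    simp only [map_mul, map_pow, φc_αg, LaurentPolynomial.T_pow, map_one, mul_one, one_mul, pow_zero]
    congr 1
    omega
  · rw [e_nonpos q hj.le]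
    simp only [map_mul, map_pow, φc_αsg, LaurentPolynomial.T_pow, map_one, mul_one, one_mul, pow_zero]
    congr 1
    omega

lemma φc_e_zero (q : ℝ) (j : ℤ) (k l : ℕ) (h : 1 ≤ k + l) : φc q (e q j k l) = 0 := by
  have hkl : k ≠ 0 ∨ l ≠ 0 := by omega
  rw [e]
  rcases hkl with hk | hl
  · split <;> simp [map_mul, map_pow, φc_βg, zero_pow hk]
  · split <;> simp [map_mul, map_pow, φc_βsg, zero_pow hl]
lemma V1_le_ker (q : ℝ) : V q 1 ≤ LinearMap.ker (φc q).toLinearMap := by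
  rw [V, Submodule.span_le]
  rintro x ⟨j, k, l, h, rfl⟩
  rw [SetLike.mem_coe, LinearMap.mem_ker, AlgHom.toLinearMap_apply, φc_e_zero q j k l h]

lemma commIdeal_apply_zero (q : ℝ) (x : SU q) (hx : x ∈ commutatorIdeal (SU q)) :
    φc q x = 0 := by
  rw [commutatorIdeal, TwoSidedIdeal.mem_span_iff] at hx
  have h := hx (TwoSidedIdeal.ker (φc q : SU q →+* LaurentPolynomial ℂ)) ?_
  · rwa [TwoSidedIdeal.mem_ker] at h
  · rintro y ⟨a, b, rfl⟩
    rw [SetLike.mem_coe, TwoSidedIdeal.mem_ker]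
    simp only [RingHom.coe_coe, map_sub, map_mul]
    rw [mul_comm]
    exact sub_self _

lemma V0_le_sup (q : ℝ) :
    V q 0 ≤ (Submodule.span ℂ (Set.range fun j : ℤ => e q j 0 0)) ⊔ V q 1 := by
  rw [V, Submodule.span_le]
  rintro x ⟨j, k, l, -, rfl⟩
  rcases Nat.eq_zero_or_pos (k + l) with h | h
  · have hk : k = 0 := by omega
    have hl : l = 0 := by omega
    subst hk; subst hl
    exact Submodule.mem_sup_left (Submodule.subset_span ⟨j, rfl⟩)
  · exact Submodule.mem_sup_right (Submodule.subset_span ⟨j, k, l, h, rfl⟩)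

lemma diag_zero (q : ℝ) {y : SU q}
    (hy : y ∈ Submodule.span ℂ (Set.range fun j : ℤ => e q j 0 0))
    (h0 : φc q y = 0) : y = 0 := by
  obtain ⟨c, rfl⟩ := Finsupp.mem_span_range_iff_exists_finsupp.mp hy
  have hmap : φc q (c.sum fun j a => a • e q j 0 0)
      = c.sum fun j a => a • LaurentPolynomial.T j := by
    rw [map_finsuppSum]
    exact Finsupp.sum_congr fun j _ => by rw [map_smul, φc_e_diag]
  have key : (c.sum fun j a => a • LaurentPolynomial.T (R := ℂ) j) = (AddMonoidAlgebra.ofCoeff c : LaurentPolynomial ℂ) := by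
    have h1 : ∀ j ∈ c.support, (c j) • LaurentPolynomial.T (R := ℂ) j
        = AddMonoidAlgebra.single j (c j) := fun j _ => by
      rw [LaurentPolynomial.T, AddMonoidAlgebra.smul_single, smul_eq_mul, mul_one]
    calc (c.sum fun j a => a • LaurentPolynomial.T (R := ℂ) j)
        = c.sum (fun j a => AddMonoidAlgebra.single j a) := Finsupp.sum_congr h1
      _ = AddMonoidAlgebra.ofCoeff c := AddMonoidAlgebra.sum_coeff_single _
  rw [hmap, key, AddMonoidAlgebra.ofCoeff_eq_zero] at h0
  subst h0
  simp

lemma forward_incl (q : ℝ) (hq : (q : ℂ) ≠ 0) (x : SU q)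
    (hx : x ∈ commutatorIdeal (SU q)) : x ∈ V q 1 := by
  have hx0 : φc q x = 0 := commIdeal_apply_zero q x hx
  have h0 : x ∈ V q 0 := mem_V0 q hq x
  have hsup := V0_le_sup q h0
  rw [Submodule.mem_sup] at hsup
  obtain ⟨y, hy, z, hz, rfl⟩ := hsup
  have hz0 : φc q z = 0 := V1_le_ker q hz
  have hy0 : φc q y = 0 := by
    have := map_add (φc q) y z
    rw [hx0, hz0, add_zero] at this
    exact this.symm
  rw [diag_zero q hy hy0, zero_add]
  exact hz
section Reverse

variable (q : ℝ)

lemma comm_mem (a b : SU q) : a * b - b * a ∈ commutatorIdeal (SU q) :=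
  TwoSidedIdeal.subset_span ⟨a, b, rfl⟩

lemma smul_mem_comm (c : ℂ) {x : SU q} (h : x ∈ commutatorIdeal (SU q)) :
    c • x ∈ commutatorIdeal (SU q) := by
  rw [Algebra.smul_def]
  exact (commutatorIdeal (SU q)).mul_mem_left _ _ h

lemma of_smul_mem_comm {c : ℂ} (hc : c ≠ 0) {x : SU q}
    (h : c • x ∈ commutatorIdeal (SU q)) : x ∈ commutatorIdeal (SU q) := by
  have : x = c⁻¹ • (c • x) := by rw [smul_smul, inv_mul_cancel₀ hc, one_smul]
  rw [this]
  exact smul_mem_comm q _ h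

variable (hq2 : ((q : ℂ) ^ 2 - 1) ≠ 0) (hq1 : ((q : ℂ) - 1) ≠ 0)

include hq2 in
lemma bbs_mem : βg q * star (βg q) ∈ commutatorIdeal (SU q) := by
  apply of_smul_mem_comm q hq2
  have he : αg q * star (αg q) - star (αg q) * αg q
      = ((q : ℂ) ^ 2 - 1) • (βg q * star (βg q)) := by
    rw [aas q trivial, asa q]; module
  rw [← he]
  exact comm_mem q _ _
include hq1 in
lemma bas_mem : βg q * star (αg q) ∈ commutatorIdeal (SU q) := by
  apply of_smul_mem_comm q hq1
  have he : star (αg q) * βg q - βg q * star (αg q)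
      = ((q : ℂ) - 1) • (βg q * star (αg q)) := by
    rw [rel_asb q]; module
  rw [← he]
  exact comm_mem q _ _

include hq1 in
lemma bsas_mem : star (βg q) * star (αg q) ∈ commutatorIdeal (SU q) := by
  apply of_smul_mem_comm q hq1
  have he : star (αg q) * star (βg q) - star (βg q) * star (αg q)
      = ((q : ℂ) - 1) • (star (βg q) * star (αg q)) := by
    rw [rel_asbs q]; module
  rw [← he]
  exact comm_mem q _ _

include hq2 hq1 in
lemma b_mem : βg q ∈ commutatorIdeal (SU q) := by
  have hd : βg q = βg q * (αg q * star (αg q)) + βg q * (βg q * star (βg q)) := by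
    rw [← mul_add, rel_unit1, mul_one]
  have h1 : βg q * (αg q * star (αg q)) = (q : ℂ) • (αg q * (βg q * star (αg q))) := by
    rw [← mul_assoc, rel_ba, smul_mul_assoc, mul_assoc]
  rw [hd, h1]
  exact (commutatorIdeal (SU q)).add_mem
    (smul_mem_comm q _ ((commutatorIdeal (SU q)).mul_mem_left _ _ (bas_mem q hq1)))
    ((commutatorIdeal (SU q)).mul_mem_left _ _ (bbs_mem q hq2))

include hq2 hq1 in
lemma bs_mem : star (βg q) ∈ commutatorIdeal (SU q) := by
  have hd : star (βg q)
      = star (βg q) * (αg q * star (αg q)) + star (βg q) * (βg q * star (βg q)) := by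
    rw [← mul_add, rel_unit1, mul_one]
  have h1 : star (βg q) * (αg q * star (αg q))
      = (q : ℂ) • (αg q * (star (βg q) * star (αg q))) := by
    rw [← mul_assoc, rel_bsa, smul_mul_assoc, mul_assoc]
  have h2 : star (βg q) * (βg q * star (βg q))
      = βg q * (star (βg q) * star (βg q)) := by
    rw [← mul_assoc, ← rel_bbs, mul_assoc]
  rw [hd, h1, h2]
  exact (commutatorIdeal (SU q)).add_mem
    (smul_mem_comm q _ ((commutatorIdeal (SU q)).mul_mem_left _ _ (bsas_mem q hq1)))
    ((commutatorIdeal (SU q)).mul_mem_right _ _ (b_mem q hq2 hq1))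

include hq2 hq1 in
lemma e_mem_comm (j : ℤ) (k l : ℕ) (h : 1 ≤ k + l) :
    e q j k l ∈ commutatorIdeal (SU q) := by
  have hβ := b_mem q hq2 hq1
  have hβs := bs_mem q hq2 hq1
  rcases k with _ | k'
  · obtain ⟨l', rfl⟩ : ∃ l', l = l' + 1 := ⟨l - 1, by omega⟩
    rw [e]
    split_ifs
    · rw [pow_succ, ← mul_assoc]
      exact (commutatorIdeal (SU q)).mul_mem_left _ _ hβs
    · rw [pow_succ, ← mul_assoc (βg q ^ 0)]
      exact (commutatorIdeal (SU q)).mul_mem_right _ _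
        ((commutatorIdeal (SU q)).mul_mem_left _ _ hβs)
  · rw [e]
    split_ifs
    · rw [pow_succ (βg q), ← mul_assoc (αg q ^ _)]
      exact (commutatorIdeal (SU q)).mul_mem_right _ _
        ((commutatorIdeal (SU q)).mul_mem_left _ _ hβ)
    · rw [pow_succ (βg q)]
      exact (commutatorIdeal (SU q)).mul_mem_right _ _
        ((commutatorIdeal (SU q)).mul_mem_right _ _
          ((commutatorIdeal (SU q)).mul_mem_left _ _ hβ))

end Reverse
/-- For `0 < q < 1`, the commutator ideal of `A(SU_q(2))` equals `V₁`. -/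
theorem commutatorIdeal_SU_eq_V_one (q : ℝ) (hq0 : 0 < q) (hq1 : q < 1) :
    ∀ x : SU q, x ∈ commutatorIdeal (SU q) ↔ x ∈ V q 1 := by
  have hqne : (q : ℂ) ≠ 0 := Complex.ofReal_ne_zero.mpr hq0.ne'
  have hq2 : ((q : ℂ) ^ 2 - 1) ≠ 0 := by
    have h2 : ((q : ℂ) ^ 2 - 1) = ((q ^ 2 - 1 : ℝ) : ℂ) := by push_cast; ring
    rw [h2]
    exact Complex.ofReal_ne_zero.mpr (by nlinarith)
  have hq1c : ((q : ℂ) - 1) ≠ 0 := by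
    have h2 : ((q : ℂ) - 1) = ((q - 1 : ℝ) : ℂ) := by push_cast; ring
    rw [h2]
    exact Complex.ofReal_ne_zero.mpr (by linarith)
  intro x
  constructor
  · exact forward_incl q hqne x
  · intro hx
    induction hx using Submodule.span_induction with
    | mem y hy =>
      obtain ⟨j, k, l, h, rfl⟩ := hy
      exact e_mem_comm q hq2 hq1c j k l h
    | zero => exact (commutatorIdeal (SU q)).zero_mem
    | add a b ha hb iha ihb => exact (commutatorIdeal (SU q)).add_mem iha ihb
    | smul c a ha iha => exact smul_mem_comm q c iha

end QAlg
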